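/- For a hyperbolic right-angled geodesic hexagon with alternating sides of lengths a, b, c and L(Γ_c) the length of the side opposite the side of length c, one has cosh(L(Γ_c)) = (cosh c + cosh a · cosh b)/(sinh a · sinh b). Consequently, regarding L(Γ_c) as a function of c with a, b fixed, |d L(Γ_c)/dc| ≤ C(L̄) · sinh(c) for all a, b, c ∈ (0, L̄/2], where C(L̄) depends only on the upper bound L̄. -/

import Mathlib

open Real

/-- Inverse hyperbolic cosine. -/
noncomputable def arcosh (x : ℝ) : ℝ := Real.log (x + Real.sqrt (x ^ 2 - 1))

/-- The length `L(Γ_c)` of the side of a right-angled hyperbolic hexagon opposite the side of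
length `c`, with alternating side lengths `a, b, c`, determined by the hexagon formula
`cosh L(Γ_c) = (cosh c + cosh a cosh b)/(sinh a sinh b)`. -/
noncomputable def hexSide (a b c : ℝ) : ℝ :=
  _root_.arcosh ((Real.cosh c + Real.cosh a * Real.cosh b) / (Real.sinh a * Real.sinh b))

lemma cosh_arcosh {x : ℝ} (hx : 1 ≤ x) : Real.cosh (_root_.arcosh x) = x := by
  have h1 : (0:ℝ) ≤ x ^ 2 - 1 := by nlinarith
  have hs : Real.sqrt (x ^ 2 - 1) ^ 2 = x ^ 2 - 1 := Real.sq_sqrt h1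
  have hs0 : 0 ≤ Real.sqrt (x ^ 2 - 1) := Real.sqrt_nonneg _
  have ht : 0 < x + Real.sqrt (x ^ 2 - 1) := by nlinarith
  rw [_root_.arcosh, Real.cosh_eq, Real.exp_log ht, ← Real.log_inv, Real.exp_log (by positivity)]
  field_simp
  nlinarith

lemma hasDerivAt_arcosh {x : ℝ} (hx : 1 < x) :
    HasDerivAt _root_.arcosh (1 / Real.sqrt (x ^ 2 - 1)) x := by
  have h1 : (0:ℝ) < x ^ 2 - 1 := by nlinarith
  have hs : Real.sqrt (x ^ 2 - 1) ^ 2 = x ^ 2 - 1 := Real.sq_sqrt h1.le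
  have hs0 : 0 < Real.sqrt (x ^ 2 - 1) := Real.sqrt_pos.mpr h1
  have ht : 0 < x + Real.sqrt (x ^ 2 - 1) := by nlinarith
  have hinner : HasDerivAt (fun y : ℝ => y ^ 2 - 1) (2 * x) x := by
    simpa using ((hasDerivAt_pow 2 x).sub_const 1)
  have hsqrt : HasDerivAt (fun y : ℝ => Real.sqrt (y ^ 2 - 1))
      (2 * x / (2 * Real.sqrt (x ^ 2 - 1))) x :=
    (Real.hasDerivAt_sqrt h1.ne').comp x hinner |>.congr_deriv (by ring)
  have hg : HasDerivAt (fun y : ℝ => y + Real.sqrt (y ^ 2 - 1))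
      (1 + 2 * x / (2 * Real.sqrt (x ^ 2 - 1))) x := (hasDerivAt_id x).add hsqrt
  have := (Real.hasDerivAt_log ht.ne').comp x hg
  refine HasDerivAt.congr_deriv (f := _root_.arcosh) this ?_
  field_simp
  ring

theorem hexagon_side_formula_and_derivative_bound (Lbar : ℝ) (hL : 0 < Lbar) :
    ∃ C : ℝ, 0 < C ∧ ∀ a b c : ℝ,
      0 < a → a ≤ Lbar / 2 → 0 < b → b ≤ Lbar / 2 → 0 < c → c ≤ Lbar / 2 →
      Real.cosh (hexSide a b c)
          = (Real.cosh c + Real.cosh a * Real.cosh b) / (Real.sinh a * Real.sinh b) ∧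
      |deriv (hexSide a b) c| ≤ C * Real.sinh c := by
  refine ⟨1, one_pos, fun a b c ha _ hb _ hc _ => ?_⟩
  have hsa : 0 < Real.sinh a := Real.sinh_pos_iff.mpr ha
  have hsb : 0 < Real.sinh b := Real.sinh_pos_iff.mpr hb
  have hs : 0 < Real.sinh a * Real.sinh b := mul_pos hsa hsb
  have hca : 1 ≤ Real.cosh a := Real.one_le_cosh a
  have hcb : 1 ≤ Real.cosh b := Real.one_le_cosh b
  have hcc : 1 ≤ Real.cosh c := Real.one_le_cosh c
  have ida : Real.cosh a ^ 2 - Real.sinh a ^ 2 = 1 := Real.cosh_sq_sub_sinh_sq a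
  have idb : Real.cosh b ^ 2 - Real.sinh b ^ 2 = 1 := Real.cosh_sq_sub_sinh_sq b
  set K := Real.cosh a * Real.cosh b with hK
  set s := Real.sinh a * Real.sinh b with hsdef
  have hKs : 1 ≤ K - s := by
    have h := Real.cosh_sub a b
    have := Real.one_le_cosh (a - b)
    rw [hK, hsdef]; linarith
  -- N ≥ 4
  have hN : 4 ≤ (Real.cosh c + K) ^ 2 - s ^ 2 := by nlinarith [hs.le, hcc, hKs]
  set u := (Real.cosh c + K) / s with hu
  have hsu : s * u = Real.cosh c + K := by rw [hu]; field_simp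
  have hu1 : 1 < u := by
    rw [hu, lt_div_iff₀ hs]
    nlinarith [hcc, hKs]
  have hform : Real.cosh (hexSide a b c) = u := by
    rw [hexSide]; exact _root_.cosh_arcosh hu1.le
  refine ⟨hform, ?_⟩
  -- derivative
  have hu2 : 0 < u ^ 2 - 1 := by nlinarith
  have hinner : HasDerivAt (fun y => (Real.cosh y + K) / s) (Real.sinh c / s) c :=
    ((Real.hasDerivAt_cosh c).add_const K).div_const s
  have hd : HasDerivAt (hexSide a b)
      (1 / Real.sqrt (u ^ 2 - 1) * (Real.sinh c / s)) c := by
    have := (_root_.hasDerivAt_arcosh hu1).comp c hinner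
    exact this
  rw [hd.deriv]
  have hsc : 0 < Real.sinh c := Real.sinh_pos_iff.mpr hc
  have hsq : 0 < Real.sqrt (u ^ 2 - 1) := Real.sqrt_pos.mpr hu2
  rw [abs_of_pos (by positivity), one_mul]
  -- need sinh c / (√(u²-1) * s) ≤ sinh c, i.e. 1 ≤ √(u²-1) * s
  have key : 1 ≤ Real.sqrt (u ^ 2 - 1) * s := by
    have : Real.sqrt (u ^ 2 - 1) * s = Real.sqrt ((u ^ 2 - 1) * s ^ 2) := by
      rw [Real.sqrt_mul hu2.le, Real.sqrt_sq hs.le]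
    rw [this]
    have h1 : (1:ℝ) ≤ (u ^ 2 - 1) * s ^ 2 := by
      have : (u ^ 2 - 1) * s ^ 2 = (s * u) ^ 2 - s ^ 2 := by ring
      rw [this, hsu]; linarith
    calc (1:ℝ) = Real.sqrt 1 := (Real.sqrt_one).symm
    _ ≤ _ := Real.sqrt_le_sqrt h1
  calc 1 / Real.sqrt (u ^ 2 - 1) * (Real.sinh c / s)
      = Real.sinh c / (Real.sqrt (u ^ 2 - 1) * s) := by ring
    _ ≤ Real.sinh c / 1 := by
        apply div_le_div_of_nonneg_left hsc.le one_pos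
        · exact key
    _ = Real.sinh c := div_one _
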